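/- Let (X, {d_r}) satisfy the weaker d_r-axioms, and let 𝒰 = {U ⊆ X × X | ∃ r > 0, ε > 0, U_{r,ε} ⊆ U}. Then 𝒰 is a quasi-uniformity on X: (a) if U ∈ 𝒰 and U ⊆ V ⊆ X × X then V ∈ 𝒰; (b) if U, V ∈ 𝒰 then U ∩ V ∈ 𝒰; (c) every U ∈ 𝒰 contains the diagonal {(x,x) | x ∈ X}; (d) for every U ∈ 𝒰 there exists V ∈ 𝒰 with V ∘ V ⊆ U. -/

import Mathlib

open ENNReal

/-- The weaker `d_r`-axioms for a family of metric-like functions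
`d : ℝ → X → X → ℝ≥0∞` indexed by `r > 0`. -/
structure WeakerDr {X : Type*} (d : ℝ → X → X → ℝ≥0∞) : Prop where
  self : ∀ (x : X) (r : ℝ), 0 < r → d r x x = 0
  mono : ∀ (x y : X) (r₁ r₂ : ℝ), 0 < r₁ → r₁ ≤ r₂ → d r₁ x y ≤ d r₂ x y
  usc : ∀ (x y : X) (r ε : ℝ), 0 < r → 0 < ε → d r x y < ENNReal.ofReal ε →
    ∃ δ : ℝ, 0 < δ ∧ d (r + δ) x y < ENNReal.ofReal ε
  weaker_tri : ∀ (x y z : X) (r₁ r₂ r₃ : ℝ), 0 < r₁ → 0 < r₂ → 0 < r₃ →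
    d (r₁ + r₂ + r₃) x y < ENNReal.ofReal r₃ → d (r₁ + r₂ + r₃) y z < ENNReal.ofReal r₂ →
    d r₁ x z ≤ d (r₁ + r₂ + r₃) x y + d (r₁ + r₂ + r₃) y z

/-- The basic entourage `U_{r,ε} = {(x,y) | d_r(x,y) < ε}`. -/
def entourageDr {X : Type*} (d : ℝ → X → X → ℝ≥0∞) (r ε : ℝ) : Set (X × X) :=
  {p | d r p.1 p.2 < ENNReal.ofReal ε}

/-- The collection of entourages `𝒰 = {U | ∃ r > 0, ε > 0, U_{r,ε} ⊆ U}`. -/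
def quasiUnifDr {X : Type*} (d : ℝ → X → X → ℝ≥0∞) : Set (Set (X × X)) :=
  {U | ∃ r ε : ℝ, 0 < r ∧ 0 < ε ∧ entourageDr d r ε ⊆ U}

theorem stmt_9 {X : Type*} (d : ℝ → X → X → ℝ≥0∞) (h : WeakerDr d) :
    (∀ U V : Set (X × X), U ∈ quasiUnifDr d → U ⊆ V → V ∈ quasiUnifDr d) ∧
    (∀ U V : Set (X × X), U ∈ quasiUnifDr d → V ∈ quasiUnifDr d →
      U ∩ V ∈ quasiUnifDr d) ∧
    (∀ U ∈ quasiUnifDr d, ∀ x : X, (x, x) ∈ U) ∧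
    (∀ U ∈ quasiUnifDr d, ∃ V ∈ quasiUnifDr d, SetRel.comp V V ⊆ U) := by
  refine ⟨?_, ?_, ?_, ?_⟩
  · rintro U V ⟨r, ε, hr, hε, hsub⟩ hUV
    exact ⟨r, ε, hr, hε, hsub.trans hUV⟩
  · rintro U V ⟨r₁, ε₁, hr₁, hε₁, hU⟩ ⟨r₂, ε₂, hr₂, hε₂, hV⟩
    refine ⟨max r₁ r₂, min ε₁ ε₂, lt_max_of_lt_left hr₁, lt_min hε₁ hε₂, ?_⟩
    intro p hp
    refine ⟨hU ?_, hV ?_⟩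
    · exact lt_of_le_of_lt (h.mono _ _ _ _ hr₁ (le_max_left _ _))
        (hp.trans_le (ENNReal.ofReal_le_ofReal (min_le_left _ _)))
    · exact lt_of_le_of_lt (h.mono _ _ _ _ hr₂ (le_max_right _ _))
        (hp.trans_le (ENNReal.ofReal_le_ofReal (min_le_right _ _)))
  · rintro U ⟨r, ε, hr, hε, hsub⟩ x
    apply hsub
    show d r x x < ENNReal.ofReal ε
    rw [h.self x r hr]
    exact ENNReal.ofReal_pos.2 hε
  · rintro U ⟨r, ε, hr, hε, hsub⟩
    set ε' : ℝ := min (ε / 2) 1 with hε'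
    have hε'pos : 0 < ε' := lt_min (by linarith) one_pos
    refine ⟨entourageDr d (r + 1 + 1) ε', ⟨r + 1 + 1, ε', by linarith, hε'pos, le_refl _⟩, ?_⟩
    rintro ⟨x, z⟩ ⟨y, hxy, hyz⟩
    apply hsub
    have h1 : d (r + 1 + 1) x y < ENNReal.ofReal 1 :=
      hxy.trans_le (ENNReal.ofReal_le_ofReal (min_le_right _ _))
    have h2 : d (r + 1 + 1) y z < ENNReal.ofReal 1 :=
      hyz.trans_le (ENNReal.ofReal_le_ofReal (min_le_right _ _))
    have key := h.weaker_tri x y z r 1 1 hr one_pos one_pos h1 h2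
    show d r x z < ENNReal.ofReal ε
    calc d r x z ≤ d (r + 1 + 1) x y + d (r + 1 + 1) y z := key
      _ < ENNReal.ofReal ε' + ENNReal.ofReal ε' :=
          ENNReal.add_lt_add hxy hyz
      _ = ENNReal.ofReal (ε' + ε') := (ENNReal.ofReal_add hε'pos.le hε'pos.le).symm
      _ ≤ ENNReal.ofReal ε := ENNReal.ofReal_le_ofReal (by
          have := min_le_left (ε / 2) 1; simp only [hε'] at *; linarith)
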